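/- Let (X, ρ) be a metric space, λ ∈ Δ∞, and let x = (x_k)_{k∈ℕ}, y = (y_k)_{k∈ℕ} be sequences in X such that the set {k ∈ ℕ : x_k ≠ y_k} has λ-density zero. Then Λ_x(λ) = Λ_y(λ) and Γ_x(λ) = Γ_y(λ), i.e., x and y have the same λ-statistical limit points and the same λ-statistical cluster points. (This is the paper's Theorem 4.3, specialized to the PM space induced by a metric, where F_{xy} = ε_{ρ(x,y)} and the strong topology is the metric topology.) -/
import Mathlib


open Filter Topology

/-- `l` belongs to the class `Δ∞`: a nondecreasing (for indices `≥ 1`) sequence of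
positive reals tending to `∞` with `l 1 = 1` and `l (n+1) ≤ l n + 1`. -/
def DeltaInfty (l : ℕ → ℝ) : Prop :=
  (∀ n, 1 ≤ n → 0 < l n) ∧ (∀ m n, 1 ≤ m → m ≤ n → l m ≤ l n) ∧
    Tendsto l atTop atTop ∧ l 1 = 1 ∧ ∀ n, 1 ≤ n → l (n + 1) ≤ l n + 1

open Classical in
/-- The number of elements of `M` in the window `I_n = [n - l n + 1, n] ∩ ℕ`. -/
noncomputable def lamCount (l : ℕ → ℝ) (M : Set ℕ) (n : ℕ) : ℕ :=
  ((Finset.Icc 1 n).filter (fun (k : ℕ) => ((n : ℝ) - l n + 1 ≤ (k : ℝ)) ∧ k ∈ M)).card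

/-- `M ⊆ ℕ` has `λ`-density `r`: `|{k ∈ I_n : k ∈ M}| / l n → r`. -/
def lamDensity (l : ℕ → ℝ) (M : Set ℕ) (r : ℝ) : Prop :=
  Tendsto (fun n => (lamCount l M n : ℝ) / l n) atTop (𝓝 r)

/-- `L` is a `λ`-statistical limit point of `x`: some subsequence of `x`, indexed (in
increasing order) by an infinite set that does not have `λ`-density zero, converges to `L`. -/
def LamStatLimitPt {X : Type*} [MetricSpace X] (l : ℕ → ℝ) (x : ℕ → X) (L : X) : Prop :=
  ∃ φ : ℕ → ℕ, StrictMono φ ∧ ¬ lamDensity l (Set.range φ) 0 ∧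
    Tendsto (x ∘ φ) atTop (𝓝 L)

/-- `Y` is a `λ`-statistical cluster point of `x`: for every `t > 0` the set
`{k : dist (x k) Y < t}` does not have `λ`-density zero. -/
def LamStatClusterPt {X : Type*} [MetricSpace X] (l : ℕ → ℝ) (x : ℕ → X) (Y : X) : Prop :=
  ∀ t > 0, ¬ lamDensity l {k | dist (x k) Y < t} 0

lemma lamCount_mono (l : ℕ → ℝ) {A B : Set ℕ} (h : A ⊆ B) (n : ℕ) :
    lamCount l A n ≤ lamCount l B n := by
  classical
  apply Finset.card_le_card
  intro k hk
  simp only [Finset.mem_filter] at hk ⊢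
  exact ⟨hk.1, hk.2.1, h hk.2.2⟩

lemma lamCount_union_le (l : ℕ → ℝ) (A B : Set ℕ) (n : ℕ) :
    lamCount l (A ∪ B) n ≤ lamCount l A n + lamCount l B n := by
  classical
  refine le_trans (Finset.card_le_card ?_) (Finset.card_union_le _ _)
  intro k hk
  simp only [Finset.mem_filter, Finset.mem_union, Set.mem_union] at hk ⊢
  rcases hk.2.2 with h | h
  · exact Or.inl ⟨hk.1, hk.2.1, h⟩
  · exact Or.inr ⟨hk.1, hk.2.1, h⟩

lemma lamDensity_zero_of_subset_union {l : ℕ → ℝ} (hl : DeltaInfty l) {A B M : Set ℕ}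
    (hA : lamDensity l A 0) (hB : lamDensity l B 0) (h : M ⊆ A ∪ B) :
    lamDensity l M 0 := by
  have hsum : Tendsto (fun n => (lamCount l A n : ℝ) / l n + (lamCount l B n : ℝ) / l n)
      atTop (𝓝 0) := by simpa using hA.add hB
  refine squeeze_zero' ?_ ?_ hsum
  · filter_upwards [eventually_ge_atTop 1] with n hn
    exact div_nonneg (Nat.cast_nonneg _) (hl.1 n hn).le
  · filter_upwards [eventually_ge_atTop 1] with n hn
    rw [← add_div]
    apply div_le_div_of_nonneg_right ?_ (hl.1 n hn).le |>.trans_eq rfl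
    · exact_mod_cast (lamCount_mono l h n).trans (lamCount_union_le l A B n)

lemma lamDensity_zero_of_finite {l : ℕ → ℝ} (hl : DeltaInfty l) {M : Set ℕ}
    (hM : M.Finite) : lamDensity l M 0 := by
  classical
  have hbd : ∀ n, (lamCount l M n : ℝ) ≤ hM.toFinset.card := by
    intro n
    have : lamCount l M n ≤ hM.toFinset.card := by
      apply Finset.card_le_card
      intro k hk
      simp only [Finset.mem_filter] at hk
      simpa using hk.2.2
    exact_mod_cast this
  have hdiv : Tendsto (fun n => (hM.toFinset.card : ℝ) / l n) atTop (𝓝 0) :=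
    tendsto_const_nhds.div_atTop hl.2.2.1
  refine squeeze_zero' ?_ ?_ hdiv
  · filter_upwards [eventually_ge_atTop 1] with n hn
    exact div_nonneg (Nat.cast_nonneg _) (hl.1 n hn).le
  · filter_upwards [eventually_ge_atTop 1] with n hn
    exact div_le_div_of_nonneg_right (hbd n) (hl.1 n hn).le |>.trans_eq rfl

lemma lamStatLimitPt_mono {X : Type*} [MetricSpace X] {l : ℕ → ℝ} (hl : DeltaInfty l)
    {x y : ℕ → X} (hxy : lamDensity l {k | x k ≠ y k} 0) {L : X}
    (hL : LamStatLimitPt l x L) : LamStatLimitPt l y L := by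
  classical
  obtain ⟨φ, hφ, hφd, hφL⟩ := hL
  set p : ℕ → Prop := fun k => k ∈ Set.range φ ∧ x k = y k with hp
  have hBd : ¬ lamDensity l (setOf p) 0 := by
    intro hB
    apply hφd
    refine lamDensity_zero_of_subset_union hl hB hxy ?_
    intro k hk
    by_cases h : x k = y k
    · exact Or.inl ⟨hk, h⟩
    · exact Or.inr h
  have hinf : (setOf p).Infinite := by
    intro hfin
    exact hBd (lamDensity_zero_of_finite hl hfin)
  set ψ : ℕ → ℕ := Nat.nth p with hψ
  have hψsm : StrictMono ψ := Nat.nth_strictMono hinf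
  have hψmem : ∀ n, p (ψ n) := fun n => Nat.nth_mem_of_infinite hinf n
  have hrange : Set.range ψ = setOf p := Nat.range_nth_of_infinite hinf
  refine ⟨ψ, hψsm, by rw [hrange]; exact hBd, ?_⟩
  have hyx : (y ∘ ψ) = (x ∘ ψ) := funext fun n => ((hψmem n).2).symm
  rw [hyx]
  rw [Metric.tendsto_atTop] at hφL ⊢
  intro ε hε
  obtain ⟨N, hN⟩ := hφL ε hε
  obtain ⟨N', hN'⟩ := eventually_atTop.mp (hψsm.tendsto_atTop.eventually_ge_atTop (φ N))
  refine ⟨N', fun n hn => ?_⟩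
  obtain ⟨m, hm⟩ := (hψmem n).1
  have hmN : N ≤ m := hφ.le_iff_le.mp (by rw [hm]; exact hN' n hn)
  simpa [Function.comp, hm] using hN m hmN

lemma lamStatClusterPt_mono {X : Type*} [MetricSpace X] {l : ℕ → ℝ} (hl : DeltaInfty l)
    {x y : ℕ → X} (hxy : lamDensity l {k | x k ≠ y k} 0) {Y : X}
    (hY : LamStatClusterPt l x Y) : LamStatClusterPt l y Y := by
  intro t ht hdens
  apply hY t ht
  refine lamDensity_zero_of_subset_union hl hdens hxy ?_
  intro k hk
  by_cases h : x k = y k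
  · exact Or.inl (by simpa [Set.mem_setOf_eq, ← h] using hk)
  · exact Or.inr h

theorem lamStat_limitPts_clusterPts_eq_of_density_zero_diff {X : Type*} [MetricSpace X]
    (l : ℕ → ℝ) (hl : DeltaInfty l) (x y : ℕ → X)
    (hxy : lamDensity l {k | x k ≠ y k} 0) :
    {L | LamStatLimitPt l x L} = {L | LamStatLimitPt l y L} ∧
      {Y | LamStatClusterPt l x Y} = {Y | LamStatClusterPt l y Y} := by
  have hxy' : lamDensity l {k | y k ≠ x k} 0 := by
    have : {k | y k ≠ x k} = {k | x k ≠ y k} := by ext k; exact ne_comm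
    rwa [this]
  constructor
  · ext L
    exact ⟨fun h => lamStatLimitPt_mono hl hxy h, fun h => lamStatLimitPt_mono hl hxy' h⟩
  · ext Y
    exact ⟨fun h => lamStatClusterPt_mono hl hxy h, fun h => lamStatClusterPt_mono hl hxy' h⟩
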